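/- Let G be uniform on {0,1}, and conditional on G = g, let M be the outcome of measuring a fixed state ψ on ℂ^d in basis g, where basis 0 and basis 1 are mutually unbiased. Then H(M,G) ≥ 1 + (1/2)·log d, with equality when ψ is a computational basis state. -/

import Mathlib

open scoped ComplexOrder

/-- Shannon entropy (in bits) of a distribution on a finite set. -/
noncomputable def dent {X : Type*} [Fintype X] (q : X → ℝ) : ℝ :=
  -∑ x, q x * Real.logb 2 (q x)

/-- Basis vector `m` of basis `g`: basis `false` is the computational basis,
basis `true` is `f`. -/
noncomputable def bvec {d : ℕ} (f : Fin d → Fin d → ℂ) (g : Bool) (m : Fin d) :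
    Fin d → ℂ :=
  if g then f m else Pi.single m 1

/-- Output distribution of the two-basis measurement channel: `G` is a uniform bit and,
given `G = g`, `M` is the Born-rule outcome of measuring `ψ` in basis `g`. -/
noncomputable def outDist {d : ℕ} (f : Fin d → Fin d → ℂ)
    (ψ : Matrix (Fin d) (Fin d) ℂ) : Bool × Fin d → ℝ :=
  fun gm => (1 / 2) *
    (dotProduct (star (bvec f gm.1 gm.2)) (ψ.mulVec (bvec f gm.1 gm.2))).re

section aux
open Matrix


lemma cs_psd {d : ℕ} (ψ : Matrix (Fin d) (Fin d) ℂ) (hψ : ψ.PosSemidef) (u v : Fin d → ℂ) :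
    ‖dotProduct (star u) (ψ.mulVec v)‖ ≤
      Real.sqrt (dotProduct (star u) (ψ.mulVec u)).re *
      Real.sqrt (dotProduct (star v) (ψ.mulVec v)).re := by
  obtain ⟨B, rfl⟩ : ∃ B : Matrix (Fin d) (Fin d) ℂ, ψ = Bᴴ * B := by
    open scoped MatrixOrder in
    exact ⟨CFC.sqrt ψ, by rw [(CFC.sqrt_nonneg ψ).posSemidef.1.eq, CFC.sqrt_mul_sqrt_self ψ hψ.nonneg]⟩
  have key : ∀ a b : Fin d → ℂ, dotProduct (star a) ((Bᴴ * B).mulVec b)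
      = dotProduct (star (B.mulVec a)) (B.mulVec b) := by
    intro a b
    rw [Matrix.star_mulVec, ← Matrix.mulVec_mulVec, ← dotProduct_mulVec]
  rw [key, key, key]
  set a := B.mulVec u
  set b := B.mulVec v
  set a' : EuclideanSpace ℂ (Fin d) := WithLp.toLp 2 a
  set b' : EuclideanSpace ℂ (Fin d) := WithLp.toLp 2 b
  have h1 : dotProduct (star a) b = (inner ℂ a' b' : ℂ) := by
    rw [EuclideanSpace.inner_toLp_toLp, dotProduct_comm]
  have h2 : dotProduct (star a) a = (inner ℂ a' a' : ℂ) := by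
    rw [EuclideanSpace.inner_toLp_toLp, dotProduct_comm]
  have h3 : dotProduct (star b) b = (inner ℂ b' b' : ℂ) := by
    rw [EuclideanSpace.inner_toLp_toLp, dotProduct_comm]
  rw [h1, h2, h3]
  have hn : ∀ x : EuclideanSpace ℂ (Fin d), Real.sqrt ((inner ℂ x x : ℂ)).re = ‖x‖ := by
    intro x
    rw [norm_eq_sqrt_re_inner (𝕜 := ℂ)]
    simp
  rw [hn, hn]
  exact norm_inner_le_norm a' b'

lemma completeness {d : ℕ} (f : Fin d → Fin d → ℂ)
    (hON : ∀ i j, dotProduct (star (f i)) (f j) = if i = j then 1 else 0) :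
    ∀ k i, ∑ m, (starRingEnd ℂ) (f m k) * f m i = if k = i then (1:ℂ) else 0 := by
  have h1 : (Matrix.of f) * (Matrix.of f)ᴴ = 1 := by
    ext i j
    simp only [Matrix.mul_apply, Matrix.conjTranspose_apply, Matrix.of_apply, Matrix.one_apply,
      Matrix.star_apply]
    have := congrArg (starRingEnd ℂ) (hON i j)
    simp only [dotProduct, Pi.star_apply, map_sum, _root_.map_mul,
      RingHomCompTriple.comp_apply, RingHom.id_apply] at this
    rw [show ((starRingEnd ℂ) (if i = j then (1:ℂ) else 0)) = if i = j then 1 else 0 by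
      split <;> simp] at this
    rw [← this]
    congr 1
    ext k
    simp [Complex.conj_conj, RCLike.star_def]
  have h2 := mul_eq_one_comm.mp h1
  intro k i
  have := congrFun (congrFun h2 k) i
  simp only [Matrix.mul_apply, Matrix.conjTranspose_apply, Matrix.of_apply, Matrix.one_apply,
    Matrix.star_apply] at this
  exact this

lemma sum_meas {d : ℕ} (f : Fin d → Fin d → ℂ)
    (hON : ∀ i j, dotProduct (star (f i)) (f j) = if i = j then 1 else 0)
    (ψ : Matrix (Fin d) (Fin d) ℂ) :
    ∑ m, dotProduct (star (f m)) (ψ.mulVec (f m)) = ψ.trace := by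
  have hcomp := completeness f hON
  have L : ∀ m, dotProduct (star (f m)) (ψ.mulVec (f m))
      = ∑ k, ∑ i, ψ k i * ((starRingEnd ℂ) (f m k) * f m i) := by
    intro m
    simp only [dotProduct, Matrix.mulVec, Pi.star_apply, Finset.mul_sum]
    refine Finset.sum_congr rfl fun k _ => Finset.sum_congr rfl fun i _ => ?_
    rw [show star (f m k) = (starRingEnd ℂ) (f m k) from rfl]
    ring
  rw [Finset.sum_congr rfl fun m _ => L m, Finset.sum_comm]
  have K : ∀ k, ∑ m, ∑ i, ψ k i * ((starRingEnd ℂ) (f m k) * f m i)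
      = ψ k k := by
    intro k
    rw [Finset.sum_comm]
    have : ∀ i, ∑ m, ψ k i * ((starRingEnd ℂ) (f m k) * f m i)
        = ψ k i * (if k = i then 1 else 0) := by
      intro i
      rw [← Finset.mul_sum, hcomp k i]
    rw [Finset.sum_congr rfl fun i _ => this i]
    simp
  rw [Finset.sum_congr rfl fun k _ => K k]
  rfl

lemma entry_single {d : ℕ} (ψ : Matrix (Fin d) (Fin d) ℂ) (i : Fin d) :
    dotProduct (star (Pi.single i (1:ℂ))) (ψ.mulVec (Pi.single i 1)) = ψ i i := by
  rw [← Pi.single_star, star_one, Matrix.mulVec_single_one, single_dotProduct]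
  simp [Matrix.transpose_apply]

lemma core {d : ℕ} (hd : 0 < d) (f : Fin d → Fin d → ℂ)
    (hON : ∀ i j, dotProduct (star (f i)) (f j) = if i = j then 1 else 0)
    (hMUB : ∀ i j, Complex.normSq (f j i) = 1 / d)
    (ψ : Matrix (Fin d) (Fin d) ℂ) (hψ : ψ.PosSemidef) (hTr : ψ.trace = 1) :
    Real.log d + (∑ i, (ψ i i).re * Real.log ((ψ i i).re))
      + ∑ m, (dotProduct (star (f m)) (ψ.mulVec (f m))).re *
          Real.log ((dotProduct (star (f m)) (ψ.mulVec (f m))).re) ≤ 0 := by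
  classical
  set p : Fin d → ℝ := fun i => (ψ i i).re with hp
  set q : Fin d → ℝ := fun m => (dotProduct (star (f m)) (ψ.mulVec (f m))).re with hq
  set c : Fin d → Fin d → ℂ :=
    fun m i => (dotProduct (star (f m)) (ψ.mulVec (Pi.single i 1))) * f m i with hc
  set μ : Fin d → Fin d → ℝ :=
    fun m i => (Real.log d + Real.log (q m) + Real.log (p i)) / 2 with hμ
  have hcomp := completeness f hON
  have hentry : ∀ i, dotProduct (star (Pi.single i (1:ℂ))) (ψ.mulVec (Pi.single i 1))
      = ψ i i := entry_single ψ
  have hreal : ∀ x : Fin d → ℂ, dotProduct (star x) (ψ.mulVec x)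
      = ((dotProduct (star x) (ψ.mulVec x)).re : ℂ) := by
    intro x
    have := (Complex.nonneg_iff.mp (hψ.dotProduct_mulVec_nonneg x)).2
    exact Complex.ext rfl (by simpa using this.symm)
  have hpnn : ∀ i, 0 ≤ p i := by
    intro i
    have := (Complex.nonneg_iff.mp (hψ.dotProduct_mulVec_nonneg (Pi.single i 1))).1
    rwa [hentry i] at this
  have hqnn : ∀ m, 0 ≤ q m := fun m => (Complex.nonneg_iff.mp (hψ.dotProduct_mulVec_nonneg (f m))).1
  have habsf : ∀ m i, ‖f m i‖ = Real.sqrt (1 / d) := by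
    intro m i
    rw [Complex.norm_def, hMUB i m]
  have hcbound : ∀ m i,
      ‖c m i‖ ≤ Real.sqrt (q m) * Real.sqrt (p i) * Real.sqrt (1 / d) := by
    intro m i
    rw [hc]
    simp only []
    rw [norm_mul, habsf m i]
    have hcs := cs_psd ψ hψ (f m) (Pi.single i 1)
    rw [hentry i] at hcs
    have : (0:ℝ) ≤ Real.sqrt (1/d) := Real.sqrt_nonneg _
    exact mul_le_mul_of_nonneg_right hcs this
  have hrowsum : ∀ m, ∑ i, c m i = dotProduct (star (f m)) (ψ.mulVec (f m)) := by
    intro m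
    have L : ∑ i, c m i = ∑ i, ∑ k, star (f m k) * ψ k i * f m i := by
      refine Finset.sum_congr rfl fun i _ => ?_
      simp only [hc, dotProduct, Matrix.mulVec_single_one, Matrix.col_apply, Pi.star_apply, mul_one,
        Finset.sum_mul]
    have R : dotProduct (star (f m)) (ψ.mulVec (f m))
        = ∑ k, ∑ i, star (f m k) * ψ k i * f m i := by
      simp only [dotProduct, Matrix.mulVec, Pi.star_apply, Finset.mul_sum]
      exact Finset.sum_congr rfl fun k _ => Finset.sum_congr rfl fun i _ => by ring
    rw [L, R, Finset.sum_comm]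
  have hcolsum : ∀ i, ∑ m, c m i = ψ i i := by
    intro i
    have L : ∀ m, c m i = ∑ k, ψ k i * ((starRingEnd ℂ) (f m k) * f m i) := by
      intro m
      simp only [hc, dotProduct, Matrix.mulVec_single_one, Matrix.col_apply, Pi.star_apply, mul_one,
        Finset.sum_mul]
      refine Finset.sum_congr rfl fun k _ => ?_
      rw [show star (f m k) = (starRingEnd ℂ) (f m k) from rfl]
      ring
    rw [Finset.sum_congr rfl fun m _ => L m, Finset.sum_comm]
    have K : ∀ k, ∑ m, ψ k i * ((starRingEnd ℂ) (f m k) * f m i)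
        = ψ k i * (if k = i then 1 else 0) := by
      intro k
      rw [← Finset.mul_sum, hcomp k i]
    rw [Finset.sum_congr rfl fun k _ => K k]
    simp
  have hsumq : ∑ m, dotProduct (star (f m)) (ψ.mulVec (f m)) = ψ.trace :=
    sum_meas f hON ψ
  have hsumqre : ∑ m, q m = 1 := by
    have := congrArg Complex.re hsumq
    rw [hTr] at this
    simpa [Complex.re_sum] using this
  have hsumpre : ∑ i, p i = 1 := by
    have := congrArg Complex.re hTr
    simpa [Matrix.trace, Matrix.diag, Complex.re_sum] using this
  have hdpos : (0:ℝ) < d := Nat.cast_pos.mpr hd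
  have sqrtexp : ∀ x : ℝ, 0 < x → Real.exp (Real.log x / 2) = Real.sqrt x := by
    intro x hx
    rw [Real.sqrt_eq_rpow, Real.rpow_def_of_pos hx]
    ring_nf
  set F : ℂ → ℂ := fun z => ∑ m, ∑ i, c m i * Complex.exp (z * (μ m i : ℝ)) with hF
  have hE1term : ∀ m i, ‖c m i‖ * Real.exp (μ m i) ≤ q m * p i := by
    intro m i
    rcases eq_or_lt_of_le (hqnn m) with h0 | hq'
    · have hc0 : ‖c m i‖ = 0 := by
        have h1 := hcbound m i
        rw [← h0] at h1
        simp only [Real.sqrt_zero, zero_mul] at h1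
        exact le_antisymm h1 (norm_nonneg _)
      rw [hc0, zero_mul]
      exact mul_nonneg (hqnn m) (hpnn i)
    rcases eq_or_lt_of_le (hpnn i) with h0 | hp'
    · have hc0 : ‖c m i‖ = 0 := by
        have h1 := hcbound m i
        rw [← h0] at h1
        simp only [Real.sqrt_zero, zero_mul, mul_zero] at h1
        exact le_antisymm h1 (norm_nonneg _)
      rw [hc0, zero_mul]
      exact mul_nonneg (hqnn m) (hpnn i)
    · have hexp : Real.exp (μ m i) = Real.sqrt d * Real.sqrt (q m) * Real.sqrt (p i) := by
        rw [hμ]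
        simp only
        rw [show (Real.log (d:ℝ) + Real.log (q m) + Real.log (p i)) / 2
          = Real.log (d:ℝ) / 2 + (Real.log (q m) / 2 + Real.log (p i) / 2) by ring,
          Real.exp_add, Real.exp_add, sqrtexp _ hdpos, sqrtexp _ hq', sqrtexp _ hp']
        ring
      have h2 : ‖c m i‖ * Real.exp (μ m i)
          ≤ (Real.sqrt (q m) * Real.sqrt (p i) * Real.sqrt (1 / d)) *
            (Real.sqrt d * Real.sqrt (q m) * Real.sqrt (p i)) := by
        rw [hexp]
        exact mul_le_mul_of_nonneg_right (hcbound m i) (by positivity)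
      refine h2.trans (le_of_eq ?_)
      rw [show (Real.sqrt (q m) * Real.sqrt (p i) * Real.sqrt (1 / d)) *
            (Real.sqrt d * Real.sqrt (q m) * Real.sqrt (p i))
          = (Real.sqrt (q m) * Real.sqrt (q m)) * (Real.sqrt (p i) * Real.sqrt (p i)) *
            (Real.sqrt (1 / d) * Real.sqrt d) by ring,
        Real.mul_self_sqrt (hqnn m), Real.mul_self_sqrt (hpnn i),
        ← Real.sqrt_mul (by positivity) , one_div, inv_mul_cancel₀ (ne_of_gt hdpos),
        Real.sqrt_one, mul_one]
  have hmulre : ∀ (z : ℂ) (x : ℝ), (z * (x:ℂ)).re = z.re * x := by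
    intro z x
    simp [Complex.mul_re]
  have hE1 : ∀ z : ℂ, z.re = 1 → ‖F z‖ ≤ 1 := by
    intro z hz
    calc ‖F z‖ ≤ ∑ m, ‖∑ i, c m i * Complex.exp (z * (μ m i : ℝ))‖ := norm_sum_le _ _
      _ ≤ ∑ m, ∑ i, ‖c m i * Complex.exp (z * (μ m i : ℝ))‖ :=
          Finset.sum_le_sum fun m _ => norm_sum_le _ _
      _ ≤ ∑ m, ∑ i, q m * p i := by
          refine Finset.sum_le_sum fun m _ => Finset.sum_le_sum fun i _ => ?_
          rw [norm_mul, Complex.norm_exp, hmulre, hz,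
            one_mul]
          exact hE1term m i
      _ = 1 := by
          simp only [← Finset.mul_sum, hsumpre, mul_one]
          exact hsumqre
  have hE0 : ∀ z : ℂ, z.re = 0 → ‖F z‖ ≤ 1 := by
    intro z hz
    set β : Fin d → ℂ := fun i => Complex.exp (z * ((Real.log (p i) / 2 : ℝ) : ℂ)) with hβ
    set α : Fin d → ℂ := fun m =>
      Complex.exp (z * (((Real.log d + Real.log (q m)) / 2 : ℝ) : ℂ)) with hα
    set w : Fin d → Fin d → ℂ := fun m i => β i * f m i with hw
    have hαabs : ∀ m, ‖α m‖ = 1 := by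
      intro m
      rw [hα]
      simp only [Complex.norm_exp, hmulre, hz, zero_mul, Real.exp_zero]
    have hβabs : ∀ i, ‖β i‖ = 1 := by
      intro i
      rw [hβ]
      simp only [Complex.norm_exp, hmulre, hz, zero_mul, Real.exp_zero]
    have hβconj : ∀ i, (starRingEnd ℂ) (β i) * β i = 1 := by
      intro i
      rw [mul_comm, Complex.mul_conj, Complex.normSq_eq_norm_sq, hβabs]
      norm_num
    have hsplit : ∀ m, ∑ i, c m i * Complex.exp (z * (μ m i : ℝ))
        = α m * dotProduct (star (f m)) (ψ.mulVec (w m)) := by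
      intro m
      have e1 : ∀ i, Complex.exp (z * (μ m i : ℝ)) = α m * β i := by
        intro i
        rw [hα, hβ, ← Complex.exp_add, ← mul_add]
        congr 2
        rw [hμ]
        push_cast
        ring
      have e2 : dotProduct (star (f m)) (ψ.mulVec (w m)) = ∑ i, β i * c m i := by
        have L : dotProduct (star (f m)) (ψ.mulVec (w m))
            = ∑ k, ∑ i, star (f m k) * ψ k i * (β i * f m i) := by
          simp only [dotProduct, Matrix.mulVec, Pi.star_apply, hw, Finset.mul_sum]
          exact Finset.sum_congr rfl fun k _ => Finset.sum_congr rfl fun i _ => by ring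
        have R : ∀ i, β i * c m i = ∑ k, star (f m k) * ψ k i * (β i * f m i) := by
          intro i
          simp only [hc, dotProduct, Matrix.mulVec_single_one, Matrix.col_apply, Pi.star_apply, mul_one,
            Finset.sum_mul, Finset.mul_sum]
          exact Finset.sum_congr rfl fun k _ => by ring
        rw [L, Finset.sum_comm]
        exact (Finset.sum_congr rfl fun i _ => (R i).symm)
      rw [e2, Finset.mul_sum]
      exact Finset.sum_congr rfl fun i _ => by rw [e1 i]; ring
    set r : Fin d → ℝ := fun m => (dotProduct (star (w m)) (ψ.mulVec (w m))).re with hr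
    have hrnn : ∀ m, 0 ≤ r m := fun m => (Complex.nonneg_iff.mp (hψ.dotProduct_mulVec_nonneg (w m))).1
    have hsumr : ∑ m, r m = 1 := by
      have L : ∀ m, dotProduct (star (w m)) (ψ.mulVec (w m))
          = ∑ k, ∑ i, (ψ k i * ((starRingEnd ℂ) (β k) * β i))
              * ((starRingEnd ℂ) (f m k) * f m i) := by
        intro m
        simp only [dotProduct, Matrix.mulVec, Pi.star_apply, hw, Finset.mul_sum]
        refine Finset.sum_congr rfl fun k _ => Finset.sum_congr rfl fun i _ => ?_
        rw [show star (β k * f m k) = (starRingEnd ℂ) (β k) * (starRingEnd ℂ) (f m k) by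
          rw [star_mul']; rfl]
        ring
      have hC : ∑ m, dotProduct (star (w m)) (ψ.mulVec (w m)) = ψ.trace := by
        rw [Finset.sum_congr rfl fun m _ => L m, Finset.sum_comm]
        have K : ∀ k, ∑ m, ∑ i, (ψ k i * ((starRingEnd ℂ) (β k) * β i))
            * ((starRingEnd ℂ) (f m k) * f m i) = ψ k k := by
          intro k
          rw [Finset.sum_comm]
          have : ∀ i, ∑ m, (ψ k i * ((starRingEnd ℂ) (β k) * β i))
              * ((starRingEnd ℂ) (f m k) * f m i)
              = (ψ k i * ((starRingEnd ℂ) (β k) * β i)) * (if k = i then 1 else 0) := by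
            intro i
            rw [← Finset.mul_sum, hcomp k i]
          rw [Finset.sum_congr rfl fun i _ => this i]
          simp only [mul_ite, mul_one, mul_zero, Finset.sum_ite_eq, Finset.mem_univ, if_true]
          rw [hβconj k, mul_one]
        rw [Finset.sum_congr rfl fun k _ => K k]
        rfl
      have := congrArg Complex.re hC
      rw [hTr] at this
      simpa [Complex.re_sum] using this
    have hcs2 : ∀ m, ‖dotProduct (star (f m)) (ψ.mulVec (w m))‖
        ≤ Real.sqrt (q m) * Real.sqrt (r m) := fun m => cs_psd ψ hψ (f m) (w m)
    calc ‖F z‖ = ‖∑ m, α m * dotProduct (star (f m)) (ψ.mulVec (w m))‖ := by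
          rw [hF]
          simp only
          rw [Finset.sum_congr rfl fun m _ => hsplit m]
      _ ≤ ∑ m, ‖α m * dotProduct (star (f m)) (ψ.mulVec (w m))‖ := norm_sum_le _ _
      _ ≤ ∑ m, Real.sqrt (q m) * Real.sqrt (r m) := by
          refine Finset.sum_le_sum fun m _ => ?_
          rw [norm_mul, hαabs m, one_mul]
          exact hcs2 m
      _ ≤ Real.sqrt (∑ m, q m) * Real.sqrt (∑ m, r m) :=
          Real.sum_sqrt_mul_sqrt_le _ hqnn hrnn
      _ = 1 := by rw [hsumqre, hsumr, Real.sqrt_one, mul_one]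
  have hdiff : Differentiable ℂ F := by
    rw [hF]
    apply Differentiable.fun_sum
    intro m _
    apply Differentiable.fun_sum
    intro i _
    exact ((differentiable_id.mul_const _).cexp).const_mul _
  have hBdd : BddAbove
      ((norm ∘ F) '' Complex.HadamardThreeLines.verticalClosedStrip 0 1) := by
    refine ⟨∑ m, ∑ i, ‖c m i‖ * Real.exp |μ m i|, ?_⟩
    rintro y ⟨zz, hzz, rfl⟩
    have hzre : zz.re ∈ Set.Icc (0:ℝ) 1 := hzz
    calc ‖F zz‖ ≤ ∑ m, ∑ i, ‖c m i * Complex.exp (zz * (μ m i : ℝ))‖ :=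
          (norm_sum_le _ _).trans (Finset.sum_le_sum fun m _ => norm_sum_le _ _)
      _ ≤ ∑ m, ∑ i, ‖c m i‖ * Real.exp |μ m i| := by
          refine Finset.sum_le_sum fun m _ => Finset.sum_le_sum fun i _ => ?_
          rw [norm_mul, Complex.norm_exp, hmulre]
          refine mul_le_mul_of_nonneg_left (Real.exp_le_exp.mpr ?_) (norm_nonneg _)
          calc zz.re * μ m i ≤ |zz.re * μ m i| := le_abs_self _
            _ = |zz.re| * |μ m i| := abs_mul _ _
            _ ≤ 1 * |μ m i| := by
                refine mul_le_mul_of_nonneg_right ?_ (abs_nonneg _)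
                rw [abs_of_nonneg hzre.1]
                exact hzre.2
            _ = |μ m i| := one_mul _
  have h3 : ∀ t : ℝ, t ∈ Set.Icc (0:ℝ) 1 → ‖F t‖ ≤ 1 := by
    intro t ht
    have hmem : (t:ℂ) ∈ Complex.HadamardThreeLines.verticalClosedStrip 0 1 := by
      simpa [Complex.HadamardThreeLines.verticalClosedStrip] using ht
    have := Complex.HadamardThreeLines.norm_le_interp_of_mem_verticalClosedStrip' (f := F)
      (a := 1) (b := 1) zero_lt_one hmem hdiff.diffContOnCl hBdd
      (fun z hz => by exact hE0 z hz)
      (fun z hz => by exact hE1 z hz)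
    simpa [Real.one_rpow] using this
  set h : ℝ → ℝ := fun t => ∑ m, ∑ i, (c m i).re * Real.exp (t * μ m i) with hh
  have hhF : ∀ t : ℝ, h t = (F (t:ℂ)).re := by
    intro t
    show (∑ m, ∑ i, (c m i).re * Real.exp (t * μ m i))
        = (∑ m, ∑ i, c m i * Complex.exp ((t:ℂ) * (μ m i : ℝ))).re
    rw [Complex.re_sum]
    refine Finset.sum_congr rfl fun m _ => ?_
    rw [Complex.re_sum]
    refine Finset.sum_congr rfl fun i _ => ?_
    rw [← Complex.ofReal_mul, ← Complex.ofReal_exp, mul_comm (c m i), Complex.re_ofReal_mul,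
      mul_comm]
  have hrowre : ∀ m, ∑ i, (c m i).re = q m := by
    intro m
    have := congrArg Complex.re (hrowsum m)
    simpa [Complex.re_sum] using this
  have hcolre : ∀ i, ∑ m, (c m i).re = p i := by
    intro i
    have := congrArg Complex.re (hcolsum i)
    simpa [Complex.re_sum] using this
  have hh0 : h 0 = 1 := by
    rw [hh]
    simp only [zero_mul, Real.exp_zero, mul_one]
    rw [Finset.sum_congr rfl fun m _ => hrowre m]
    exact hsumqre
  have hht : ∀ t, t ∈ Set.Icc (0:ℝ) 1 → h t ≤ 1 := by
    intro t ht
    rw [hhF]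
    exact (Complex.re_le_norm _).trans (h3 t ht)
  set D : ℝ := ∑ m, ∑ i, (c m i).re * μ m i with hD
  have hder : HasDerivAt h D 0 := by
    rw [hh, hD]
    apply HasDerivAt.fun_sum
    intro m _
    apply HasDerivAt.fun_sum
    intro i _
    have h1 : HasDerivAt (fun t : ℝ => t * μ m i) (μ m i) 0 := hasDerivAt_mul_const _
    have h2 := (h1.exp).const_mul ((c m i).re)
    convert h2 using 1
    · rfl
    simp
  have hD0 : D ≤ 0 := by
    have hs := hasDerivAt_iff_tendsto_slope.mp hder
    have hsub : Set.Ioi (0:ℝ) ⊆ {(0:ℝ)}ᶜ := fun x hx => ne_of_gt hx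
    have hs' := hs.mono_left (nhdsWithin_mono 0 hsub)
    refine le_of_tendsto hs' ?_
    filter_upwards [Ioc_mem_nhdsGT_of_mem (Set.mem_Ico.mpr ⟨le_refl 0, zero_lt_one⟩)] with t ht
    have h1 : h t ≤ 1 := hht t ⟨le_of_lt ht.1, ht.2⟩
    rw [slope_def_field, hh0, sub_zero]
    have h2 : h t - 1 ≤ 0 := by linarith
    exact div_nonpos_iff.mpr (Or.inr ⟨h2, le_of_lt ht.1⟩)
  have hDval : D = (Real.log d + (∑ m, q m * Real.log (q m))
      + ∑ i, p i * Real.log (p i)) / 2 := by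
    rw [hD]
    have e1 : ∀ m i, (c m i).re * μ m i
        = ((c m i).re * Real.log d + (c m i).re * Real.log (q m)
          + (c m i).re * Real.log (p i)) / 2 := by
      intro m i
      rw [hμ]
      ring
    calc ∑ m, ∑ i, (c m i).re * μ m i
        = ∑ m, ∑ i, ((c m i).re * Real.log d + (c m i).re * Real.log (q m)
          + (c m i).re * Real.log (p i)) / 2 :=
          Finset.sum_congr rfl fun m _ => Finset.sum_congr rfl fun i _ => e1 m i
      _ = ∑ m, ((∑ i, (c m i).re * Real.log d) + (∑ i, (c m i).re * Real.log (q m))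
          + (∑ i, (c m i).re * Real.log (p i))) / 2 :=
          Finset.sum_congr rfl fun m _ => by
            rw [← Finset.sum_div, Finset.sum_add_distrib, Finset.sum_add_distrib]
      _ = ((∑ m, ∑ i, (c m i).re * Real.log d)
          + (∑ m, ∑ i, (c m i).re * Real.log (q m))
          + (∑ m, ∑ i, (c m i).re * Real.log (p i))) / 2 := by
          rw [← Finset.sum_div, Finset.sum_add_distrib, Finset.sum_add_distrib]
      _ = (Real.log d + (∑ m, q m * Real.log (q m)) + ∑ i, p i * Real.log (p i)) / 2 := by
          congr 2
          · congr 1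
            · calc ∑ m, ∑ i, (c m i).re * Real.log d
                  = ∑ m, q m * Real.log d := by
                    refine Finset.sum_congr rfl fun m _ => ?_
                    rw [← Finset.sum_mul, hrowre m]
                _ = (∑ m, q m) * Real.log d := by rw [Finset.sum_mul]
                _ = Real.log d := by rw [hsumqre, one_mul]
            · refine Finset.sum_congr rfl fun m _ => ?_
              rw [← Finset.sum_mul, hrowre m]
          · rw [Finset.sum_comm]
            refine Finset.sum_congr rfl fun i _ => ?_
            rw [← Finset.sum_mul, hcolre i]
  have hfinal : Real.log d + (∑ i, p i * Real.log (p i))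
      + ∑ m, q m * Real.log (q m) ≤ 0 := by
    rw [hDval] at hD0
    linarith
  simpa only [hp, hq] using hfinal
lemma half_ent {d : ℕ} (r : Fin d → ℝ) (hnn : ∀ m, 0 ≤ r m) (hsum : ∑ m, r m = 1) :
    -∑ m, (1 / 2 * r m) * Real.logb 2 (1 / 2 * r m)
      = 1 / 2 + 1 / 2 * (-∑ m, r m * Real.logb 2 (r m)) := by
  have key : ∀ m, (1 / 2 * r m) * Real.logb 2 (1 / 2 * r m)
      = 1 / 2 * (r m * Real.logb 2 (r m)) - 1 / 2 * r m := by
    intro m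
    rcases eq_or_lt_of_le (hnn m) with h0 | hpos
    · rw [← h0]
      simp
    · have hne : r m ≠ 0 := ne_of_gt hpos
      rw [Real.logb_mul (by norm_num) hne]
      have : Real.logb 2 (1 / 2) = -1 := by
        rw [show (1:ℝ)/2 = 2⁻¹ by norm_num, Real.logb_inv, Real.logb_self_eq_one] <;> norm_num
      rw [this]
      ring
  rw [Finset.sum_congr rfl fun m _ => key m, Finset.sum_sub_distrib, ← Finset.mul_sum,
    ← Finset.mul_sum, hsum]
  ring

lemma dent_eq {d : ℕ} (f : Fin d → Fin d → ℂ) (ψ : Matrix (Fin d) (Fin d) ℂ)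
    (hnn : ∀ g m, 0 ≤ (dotProduct (star (bvec f g m)) (ψ.mulVec (bvec f g m))).re)
    (hsum : ∀ g : Bool,
      ∑ m, (dotProduct (star (bvec f g m)) (ψ.mulVec (bvec f g m))).re = 1) :
    dent (outDist f ψ) = 1 + 1 / 2 *
      ((-∑ m, (dotProduct (star (bvec f false m)) (ψ.mulVec (bvec f false m))).re *
          Real.logb 2 ((dotProduct (star (bvec f false m)) (ψ.mulVec (bvec f false m))).re))
      + (-∑ m, (dotProduct (star (bvec f true m)) (ψ.mulVec (bvec f true m))).re *
          Real.logb 2 ((dotProduct (star (bvec f true m)) (ψ.mulVec (bvec f true m))).re))) := by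
  unfold dent outDist
  rw [Fintype.sum_prod_type, Fintype.sum_bool, neg_add]
  rw [half_ent _ (hnn true) (hsum true), half_ent _ (hnn false) (hsum false)]
  ring

end aux

/-- With `G` uniform on `{0,1}` and `M` the outcome of measuring `ψ` in basis `G`,
for mutually unbiased bases: `H(M,G) ≥ 1 + (1/2) log d`, with equality when `ψ` is a
computational basis state. -/
theorem stmt17 (d : ℕ) (hd : 0 < d) (f : Fin d → Fin d → ℂ)
    (hON : ∀ i j, dotProduct (star (f i)) (f j) = if i = j then 1 else 0)
    (hMUB : ∀ i j, Complex.normSq (f j i) = 1 / d) :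
    (∀ ψ : Matrix (Fin d) (Fin d) ℂ, ψ.PosSemidef → ψ.trace = 1 →
      1 + (1 / 2) * Real.logb 2 d ≤ dent (outDist f ψ)) ∧
    (∀ w : Fin d,
      dent (outDist f (Matrix.single w w 1)) = 1 + (1 / 2) * Real.logb 2 d) := by
  have hd0 : (d:ℝ) ≠ 0 := ne_of_gt (Nat.cast_pos.mpr hd)
  have hbf : ∀ m : Fin d, bvec f false m = Pi.single m 1 := fun m => rfl
  have hbt : ∀ m : Fin d, bvec f true m = f m := fun m => rfl
  have hlog2 : 0 < Real.log 2 := Real.log_pos (by norm_num)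
  have conv : ∀ (x : Fin d → ℝ), -∑ m, x m * Real.logb 2 (x m)
      = (-∑ m, x m * Real.log (x m)) / Real.log 2 := by
    intro x
    rw [neg_div, Finset.sum_div]
    congr 1
    refine Finset.sum_congr rfl fun m _ => ?_
    rw [Real.logb, mul_div_assoc]
  constructor
  · intro ψ hψ hTr
    have hnn : ∀ (g : Bool) (m : Fin d),
        0 ≤ (dotProduct (star (bvec f g m)) (ψ.mulVec (bvec f g m))).re :=
      fun g m => (Complex.nonneg_iff.mp (hψ.dotProduct_mulVec_nonneg _)).1
    have hsumT : ∑ m, (dotProduct (star (bvec f true m)) (ψ.mulVec (bvec f true m))).re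
        = 1 := by
      simp only [hbt]
      have := congrArg Complex.re (sum_meas f hON ψ)
      rw [hTr] at this
      simpa [Complex.re_sum] using this
    have hsumF : ∑ m, (dotProduct (star (bvec f false m)) (ψ.mulVec (bvec f false m))).re
        = 1 := by
      simp only [hbf, entry_single]
      have := congrArg Complex.re hTr
      simpa [Matrix.trace, Matrix.diag, Complex.re_sum] using this
    have hsum : ∀ g : Bool,
        ∑ m, (dotProduct (star (bvec f g m)) (ψ.mulVec (bvec f g m))).re = 1 := by
      intro g
      cases g
      · exact hsumF
      · exact hsumT
    rw [dent_eq f ψ hnn hsum]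
    have hcore := core hd f hON hMUB ψ hψ hTr
    have eF : (-∑ m, (dotProduct (star (bvec f false m))
          (ψ.mulVec (bvec f false m))).re *
          Real.logb 2 ((dotProduct (star (bvec f false m))
            (ψ.mulVec (bvec f false m))).re))
        = (-∑ i, (ψ i i).re * Real.log ((ψ i i).re)) / Real.log 2 := by
      simp only [hbf, entry_single]
      exact conv _
    have eT : (-∑ m, (dotProduct (star (bvec f true m))
          (ψ.mulVec (bvec f true m))).re *
          Real.logb 2 ((dotProduct (star (bvec f true m))
            (ψ.mulVec (bvec f true m))).re))
        = (-∑ m, (dotProduct (star (f m)) (ψ.mulVec (f m))).re *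
            Real.log ((dotProduct (star (f m)) (ψ.mulVec (f m))).re)) / Real.log 2 := by
      simp only [hbt]
      exact conv _
    rw [eF, eT]
    have hlogb : Real.logb 2 d = Real.log d / Real.log 2 := rfl
    rw [hlogb]
    have hnum : Real.log d ≤ (-∑ i, (ψ i i).re * Real.log ((ψ i i).re))
        + (-∑ m, (dotProduct (star (f m)) (ψ.mulVec (f m))).re *
            Real.log ((dotProduct (star (f m)) (ψ.mulVec (f m))).re)) := by
      linarith
    have hdiv : Real.log d / Real.log 2
        ≤ ((-∑ i, (ψ i i).re * Real.log ((ψ i i).re))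
        + (-∑ m, (dotProduct (star (f m)) (ψ.mulVec (f m))).re *
            Real.log ((dotProduct (star (f m)) (ψ.mulVec (f m))).re))) / Real.log 2 :=
      (div_le_div_iff_of_pos_right hlog2).mpr hnum
    rw [← add_div] at *
    linarith
  · intro w
    set ψw := Matrix.single w w (1:ℂ) with hψw
    have hval : ∀ v : Fin d → ℂ,
        (dotProduct (star v) (ψw.mulVec v)).re = Complex.normSq (v w) := by
      intro v
      have h1 : dotProduct (star v) (ψw.mulVec v) = v w * star (v w) := by
        simp only [hψw, dotProduct, Matrix.mulVec, Matrix.single, Matrix.of_apply,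
          Pi.star_apply, ite_and, ite_mul, one_mul, zero_mul, Finset.sum_ite_eq,
          Finset.mem_univ, if_true]
        rw [Finset.sum_congr rfl (fun k _ => by
          rw [show (∑ i, if w = k then if w = i then v i else 0 else 0)
            = if w = k then v w else 0 from by split <;> simp [Finset.sum_ite_eq]])]
        simp [mul_ite, mul_zero, mul_comm]
      rw [h1, show star (v w) = (starRingEnd ℂ) (v w) from rfl, Complex.mul_conj,
        Complex.ofReal_re]
    have hnn : ∀ (g : Bool) (m : Fin d),
        0 ≤ (dotProduct (star (bvec f g m)) (ψw.mulVec (bvec f g m))).re := by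
      intro g m
      rw [hval]
      exact Complex.normSq_nonneg _
    have hF : ∀ m, (dotProduct (star (bvec f false m)) (ψw.mulVec (bvec f false m))).re
        = if m = w then 1 else 0 := by
      intro m
      rw [hval, hbf m]
      rcases eq_or_ne m w with h | h
      · subst h
        simp
      · simp [Pi.single_apply, Ne.symm h, h]
    have hT : ∀ m, (dotProduct (star (bvec f true m)) (ψw.mulVec (bvec f true m))).re
        = 1 / (d:ℝ) := by
      intro m
      rw [hval, hbt m]
      exact hMUB w m
    have hsum : ∀ g : Bool,
        ∑ m, (dotProduct (star (bvec f g m)) (ψw.mulVec (bvec f g m))).re = 1 := by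
      intro g
      cases g
      · rw [Finset.sum_congr rfl fun m _ => hF m]
        simp
      · rw [Finset.sum_congr rfl fun m _ => hT m]
        rw [Finset.sum_const, Finset.card_univ, Fintype.card_fin, nsmul_eq_mul]
        field_simp
    rw [dent_eq f ψw hnn hsum]
    have eF : (∑ m, (dotProduct (star (bvec f false m))
        (ψw.mulVec (bvec f false m))).re *
        Real.logb 2 ((dotProduct (star (bvec f false m))
          (ψw.mulVec (bvec f false m))).re)) = 0 := by
      rw [Finset.sum_congr rfl fun m _ => by rw [hF m]]
      refine Finset.sum_eq_zero fun m _ => ?_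
      rcases eq_or_ne m w with h | h
      · simp [h]
      · simp [h]
    have eT : (∑ m, (dotProduct (star (bvec f true m))
        (ψw.mulVec (bvec f true m))).re *
        Real.logb 2 ((dotProduct (star (bvec f true m))
          (ψw.mulVec (bvec f true m))).re)) = -Real.logb 2 d := by
      rw [Finset.sum_congr rfl fun m _ => by rw [hT m]]
      rw [Finset.sum_const, Finset.card_univ, Fintype.card_fin, nsmul_eq_mul]
      rw [one_div, Real.logb_inv]
      field_simp
    rw [eF, eT]
    ring
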